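/- For all $(a,b)$ with $0 < a$, $0 < b$, $a + b < 4$, the Hessian of $f(a,b) := 4 + \frac{1}{2}\big(ab - 2a - 2b - \sqrt{ab(4-a)(4-b)}\big)$ is positive definite; in particular $\frac{\partial^2 f}{\partial a^2} = \frac{2}{a(4-a)}\sqrt{\frac{b(4-b)}{a(4-a)}} > 0$. -/

import Mathlib

lemma sqrtg_hasDerivAt {x : ℝ} (hx : 0 < x) (hx4 : x < 4) :
    HasDerivAt (fun t : ℝ => Real.sqrt (t*(4-t))) ((4-2*x)/(2*Real.sqrt (x*(4-x)))) x := by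
  have hp : HasDerivAt (fun t : ℝ => t*(4-t)) (4-2*x) x := by
    have h := (hasDerivAt_id x).mul ((hasDerivAt_const x (4:ℝ)).sub (hasDerivAt_id x))
    refine h.congr_deriv (Eq.symm ?_)
    simp [id]; ring
  have hne : x*(4-x) ≠ 0 := ne_of_gt (by nlinarith)
  have h := (Real.hasDerivAt_sqrt hne).comp x hp
  refine h.congr_deriv (Eq.symm ?_)
  ring

lemma L1 (A B C : ℝ) {x : ℝ} (hx : 0 < x) (hx4 : x < 4) :
    HasDerivAt (fun t : ℝ => A + B*t + C*Real.sqrt (t*(4-t)))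
      (B + C*((4-2*x)/(2*Real.sqrt (x*(4-x))))) x := by
  have h := ((hasDerivAt_const x A).add ((hasDerivAt_id x).const_mul B)).add
    ((sqrtg_hasDerivAt hx hx4).const_mul C)
  refine h.congr_deriv (Eq.symm ?_)
  simp [id]

lemma L2 (B C : ℝ) {x : ℝ} (hx : 0 < x) (hx4 : x < 4) :
    HasDerivAt (fun t : ℝ => B + C*((4-2*t)/(2*Real.sqrt (t*(4-t)))))
      (C*(-4/((x*(4-x))*Real.sqrt (x*(4-x))))) x := by
  have hgpos : 0 < x*(4-x) := by nlinarith
  have hs : 0 < Real.sqrt (x*(4-x)) := Real.sqrt_pos.2 hgpos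
  have hN : HasDerivAt (fun t : ℝ => 4-2*t) (-2) x := by
    have h := (hasDerivAt_const x (4:ℝ)).sub ((hasDerivAt_id x).const_mul 2)
    refine h.congr_deriv (Eq.symm ?_)
    simp [id]
  have hD := (sqrtg_hasDerivAt hx hx4).const_mul 2
  have hDne : 2*Real.sqrt (x*(4-x)) ≠ 0 := by positivity
  have h := ((hN.div hD hDne).const_mul C).const_add B
  refine h.congr_deriv (Eq.symm ?_)
  set s := Real.sqrt (x*(4-x)) with hsdef
  have hs2 : s^2 = x*(4-x) := Real.sq_sqrt hgpos.le
  rw [← hs2]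
  have hsne : s ≠ 0 := ne_of_gt hs
  field_simp
  ring_nf
  linear_combination 4*C*hs2

lemma L3 (A B C : ℝ) {a : ℝ} (ha : 0 < a) (ha4 : a < 4) :
    deriv (fun x => deriv (fun t : ℝ => A + B*t + C*Real.sqrt (t*(4-t))) x) a
      = C*(-4/((a*(4-a))*Real.sqrt (a*(4-a)))) := by
  have hev : (fun x => deriv (fun t : ℝ => A + B*t + C*Real.sqrt (t*(4-t))) x)
      =ᶠ[nhds a] (fun x => B + C*((4-2*x)/(2*Real.sqrt (x*(4-x))))) := by
    filter_upwards [Ioo_mem_nhds ha ha4] with x hx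
    exact (L1 A B C hx.1 hx.2).deriv
  rw [hev.deriv_eq]
  exact (L2 B C ha ha4).deriv

noncomputable def f (a b : ℝ) : ℝ :=
  4 + 1 / 2 * (a * b - 2 * a - 2 * b - Real.sqrt (a * b * (4 - a) * (4 - b)))

theorem stmt_11 (a b : ℝ) (ha : 0 < a) (hb : 0 < b) (hab : a + b < 4) :
    deriv (fun x => deriv (fun x' => f x' b) x) a
      = 2 / (a * (4 - a)) * Real.sqrt (b * (4 - b) / (a * (4 - a))) ∧
    0 < deriv (fun x => deriv (fun x' => f x' b) x) a ∧
    0 < deriv (fun x => deriv (fun x' => f x' b) x) a *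
          deriv (fun y => deriv (fun y' => f a y') y) b -
        deriv (fun y => deriv (fun x => f x y) a) b ^ 2 := by
  have ha4 : a < 4 := by linarith
  have hb4 : b < 4 := by linarith
  have hg : 0 < a*(4-a) := by nlinarith
  have hh : 0 < b*(4-b) := by nlinarith
  set sg := Real.sqrt (a*(4-a)) with hsgdef
  set sh := Real.sqrt (b*(4-b)) with hshdef
  have hsg : 0 < sg := Real.sqrt_pos.2 hg
  have hsh : 0 < sh := Real.sqrt_pos.2 hh
  have hsg2 : sg^2 = a*(4-a) := Real.sq_sqrt hg.le
  have hsh2 : sh^2 = b*(4-b) := Real.sq_sqrt hh.le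
  have e1 : (fun x' => f x' b)
      = fun t : ℝ => (4-b) + ((b-2)/2)*t + (-sh/2)*Real.sqrt (t*(4-t)) := by
    funext t
    simp only [f]
    rw [show t*b*(4-t)*(4-b) = (b*(4-b))*(t*(4-t)) by ring, Real.sqrt_mul hh.le, ← hshdef]
    ring
  have e2 : (fun y' => f a y')
      = fun t : ℝ => (4-a) + ((a-2)/2)*t + (-sg/2)*Real.sqrt (t*(4-t)) := by
    funext t
    simp only [f]
    rw [show a*t*(4-a)*(4-t) = (a*(4-a))*(t*(4-t)) by ring, Real.sqrt_mul hg.le, ← hsgdef]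
    ring
  have hFaa : deriv (fun x => deriv (fun x' => f x' b) x) a = 2*sh/((a*(4-a))*sg) := by
    simp only [e1]
    rw [L3 _ _ _ ha ha4, ← hsgdef]
    field_simp
    ring
  have hFbb : deriv (fun y => deriv (fun y' => f a y') y) b = 2*sg/((b*(4-b))*sh) := by
    simp only [e2]
    rw [L3 _ _ _ hb hb4, ← hshdef]
    field_simp
    ring
  have hev2 : (fun y => deriv (fun x => f x y) a)
      =ᶠ[nhds b] (fun y => (-1 : ℝ) + (1/2)*y + (-((4-2*a)/(2*sg))/2)*Real.sqrt (y*(4-y))) := by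
    filter_upwards [Ioo_mem_nhds hb hb4] with y hy
    have e3 : (fun x => f x y)
        = fun t : ℝ => (4-y) + ((y-2)/2)*t + (-(Real.sqrt (y*(4-y)))/2)*Real.sqrt (t*(4-t)) := by
      funext t
      simp only [f]
      rw [show t*y*(4-t)*(4-y) = (y*(4-y))*(t*(4-t)) by ring,
        Real.sqrt_mul (by nlinarith [hy.1, hy.2] : (0:ℝ) ≤ y*(4-y))]
      ring
    rw [e3, (L1 _ _ _ ha ha4).deriv, ← hsgdef]
    ring
  have hFab : deriv (fun y => deriv (fun x => f x y) a) b
      = 1/2 + (-((4-2*a)/(2*sg))/2)*((4-2*b)/(2*sh)) := by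
    rw [hev2.deriv_eq, (L1 _ _ _ hb hb4).deriv, ← hshdef]
  refine ⟨?_, ?_, ?_⟩
  · rw [hFaa, Real.sqrt_div hh.le, ← hsgdef, ← hshdef]
    field_simp
  · rw [hFaa]
    positivity
  · rw [hFaa, hFbb, hFab, ← hsg2, ← hsh2]
    have h1 : 4*(sg*sh) - (4-2*a)*(4-2*b) < 16 := by
      nlinarith [sq_nonneg (sg-sh), sq_nonneg (4-a-b), hsg2, hsh2]
    have h2 : -16 < 4*(sg*sh) - (4-2*a)*(4-2*b) := by
      nlinarith [mul_nonneg hsg.le hsh.le, mul_pos ha (show (0:ℝ) < 4-b by linarith),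
        mul_pos hb (show (0:ℝ) < 4-a by linarith)]
    have goal_eq : (2*sh/(sg^2*sg))*(2*sg/(sh^2*sh))
        - (1/2 + (-((4-2*a)/(2*sg))/2)*((4-2*b)/(2*sh)))^2
        = (16 - (4*(sg*sh) - (4-2*a)*(4-2*b))) * (16 + (4*(sg*sh) - (4-2*a)*(4-2*b)))
          / (64*(sg*sh)^2) := by
      field_simp
      ring
    rw [goal_eq]
    apply div_pos (mul_pos (by linarith) (by linarith)) (by positivity)
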